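/- Let n ≥ 2 and let p be a tropical polynomial of degree n with coefficients a₀,…,aₙ ∈ ℝ ∪ {∞} such that a₀ and aₙ are finite and for every i with 0 < i < n the point (i, a_i) lies strictly above the line segment joining (0, a₀) and (n, aₙ), i.e. a_i > a₀ + (i/n)(aₙ − a₀) (where a_i = ∞ counts as strictly above). Then p is irreducible except for monomial factors: whenever p = f ⊗ g is a product of two tropical polynomials, at least one of f, g has exactly one finite coefficient (i.e. is a tropical monomial). -/

import Mathlib

/-- Min-plus (tropical) convolution of coefficient sequences with values in
`ℝ ∪ {∞}` (missing coefficients are `∞ = ⊤`). -/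
noncomputable def tconv (a b : ℕ → WithTop ℝ) (j : ℕ) : WithTop ℝ :=
  (Finset.range (j + 1)).inf fun i => a i + b (j - i)

/-- A tropical polynomial of degree `n` whose diagram lies strictly above the line
segment joining its lowest- and highest-degree terms (except at those two points)
is irreducible apart from monomial factors. -/
theorem strictly_concave_irreducible (n : ℕ) (hn : 2 ≤ n)
    (a : ℕ → WithTop ℝ) (A0 An : ℝ)
    (h0 : a 0 = (A0 : WithTop ℝ)) (hnn : a n = (An : WithTop ℝ))
    (hdeg : ∀ i, n < i → a i = ⊤)
    (habove : ∀ i, 0 < i → i < n →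
      ((A0 + (i / n : ℝ) * (An - A0) : ℝ) : WithTop ℝ) < a i)
    (f g : ℕ → WithTop ℝ) (df dg : ℕ)
    (hf : f df ≠ ⊤) (hf' : ∀ i, df < i → f i = ⊤)
    (hg : g dg ≠ ⊤) (hg' : ∀ i, dg < i → g i = ⊤)
    (hprod : ∀ j, a j = tconv f g j) :
    (∃! i, f i ≠ ⊤) ∨ (∃! i, g i ≠ ⊤) := by
  -- f 0 + g 0 = A0
  have hA0 : f 0 + g 0 = (A0 : WithTop ℝ) := by
    have := hprod 0
    rw [h0] at this
    simpa [tconv] using this.symm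
  have hf0 : f 0 ≠ ⊤ := by
    intro h
    rw [h, top_add] at hA0
    exact (WithTop.coe_ne_top hA0.symm)
  have hg0 : g 0 ≠ ⊤ := by
    intro h
    rw [h, add_top] at hA0
    exact (WithTop.coe_ne_top hA0.symm)
  have hfgtop : f df + g dg ≠ ⊤ := WithTop.add_ne_top.2 ⟨hf, hg⟩
  -- df + dg = n
  have hle : df + dg ≤ n := by
    by_contra h
    push_neg at h
    have htop : a (df + dg) = ⊤ := hdeg _ h
    have hmem : df ∈ Finset.range (df + dg + 1) := by
      simp
    have hle' : tconv f g (df + dg) ≤ f df + g dg := by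
      have := Finset.inf_le (f := fun i => f i + g (df + dg - i)) hmem
      simpa [tconv] using this
    rw [← hprod, htop] at hle'
    exact hfgtop (top_le_iff.1 hle')
  have hge : n ≤ df + dg := by
    by_contra h
    push_neg at h
    have : tconv f g n = ⊤ := by
      rw [tconv, Finset.inf_eq_top_iff]
      intro i hi
      simp only [Finset.mem_range] at hi
      by_cases hid : df < i
      · rw [hf' i hid, top_add]
      · have : dg < n - i := by omega
        rw [hg' _ this, add_top]
    rw [← hprod, hnn] at this
    exact WithTop.coe_ne_top this
  have hdfdg : df + dg = n := le_antisymm hle hge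
  -- degenerate cases
  by_cases hdf0 : df = 0
  · left
    subst hdf0
    refine ⟨0, hf, fun y hy => ?_⟩
    by_contra hy0
    exact hy (hf' y (by omega))
  by_cases hdg0 : dg = 0
  · right
    subst hdg0
    refine ⟨0, hg, fun y hy => ?_⟩
    by_contra hy0
    exact hy (hg' y (by omega))
  exfalso
  have hdfpos : 0 < df := Nat.pos_of_ne_zero hdf0
  have hdgpos : 0 < dg := Nat.pos_of_ne_zero hdg0
  have hdflt : df < n := by omega
  have hdglt : dg < n := by omega
  -- a n = f df + g dg
  have hAn : f df + g dg = (An : WithTop ℝ) := by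
    rw [← hnn, hprod n]
    simp only [tconv]
    apply le_antisymm
    · apply Finset.le_inf
      intro i hi
      simp only [Finset.mem_range] at hi
      rcases lt_trichotomy i df with h | h | h
      · have : dg < n - i := by omega
        rw [hg' _ this, add_top]
        exact le_top
      · subst h
        have : n - i = dg := by omega
        rw [this]
      · rw [hf' i h, top_add]
        exact le_top
    · have hmem : df ∈ Finset.range (n + 1) := by simp; omega
      have := Finset.inf_le (f := fun i => f i + g (n - i)) hmem
      have heq : n - df = dg := by omega
      simpa [heq] using this
  -- a df ≤ f df + g 0, a dg ≤ f 0 + g dg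
  have h1 : a df ≤ f df + g 0 := by
    rw [hprod df]
    have hmem : df ∈ Finset.range (df + 1) := by simp
    have := Finset.inf_le (f := fun i => f i + g (df - i)) hmem
    simpa [tconv] using this
  have h2 : a dg ≤ f 0 + g dg := by
    rw [hprod dg]
    have hmem : 0 ∈ Finset.range (dg + 1) := by simp
    have := Finset.inf_le (f := fun i => f i + g (dg - i)) hmem
    simpa [tconv] using this
  -- extract reals
  obtain ⟨F0, hF0⟩ := WithTop.ne_top_iff_exists.1 hf0
  obtain ⟨G0, hG0⟩ := WithTop.ne_top_iff_exists.1 hg0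
  obtain ⟨Fd, hFd⟩ := WithTop.ne_top_iff_exists.1 hf
  obtain ⟨Gd, hGd⟩ := WithTop.ne_top_iff_exists.1 hg
  have hadf : a df ≠ ⊤ := by
    intro h
    rw [h] at h1
    exact WithTop.add_ne_top.2 ⟨hf, hg0⟩ (top_le_iff.1 h1)
  have hadg : a dg ≠ ⊤ := by
    intro h
    rw [h] at h2
    exact WithTop.add_ne_top.2 ⟨hf0, hg⟩ (top_le_iff.1 h2)
  obtain ⟨x, hx⟩ := WithTop.ne_top_iff_exists.1 hadf
  obtain ⟨y, hy⟩ := WithTop.ne_top_iff_exists.1 hadg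
  -- real equations
  have e0 : F0 + G0 = A0 := by
    have : ((F0 + G0 : ℝ) : WithTop ℝ) = (A0 : WithTop ℝ) := by
      rw [WithTop.coe_add, hF0, hG0]; exact hA0
    exact_mod_cast this
  have en : Fd + Gd = An := by
    have : ((Fd + Gd : ℝ) : WithTop ℝ) = (An : WithTop ℝ) := by
      rw [WithTop.coe_add, hFd, hGd]; exact hAn
    exact_mod_cast this
  have r1 : x ≤ Fd + G0 := by
    have : ((x : ℝ) : WithTop ℝ) ≤ ((Fd + G0 : ℝ) : WithTop ℝ) := by
      rw [WithTop.coe_add, hx, hFd, hG0]; exact h1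
    exact_mod_cast this
  have r2 : y ≤ F0 + Gd := by
    have : ((y : ℝ) : WithTop ℝ) ≤ ((F0 + Gd : ℝ) : WithTop ℝ) := by
      rw [WithTop.coe_add, hy, hF0, hGd]; exact h2
    exact_mod_cast this
  have hb1 : A0 + (df / n : ℝ) * (An - A0) < x := by
    have := habove df hdfpos hdflt
    rw [← hx] at this
    exact_mod_cast this
  have hb2 : A0 + (dg / n : ℝ) * (An - A0) < y := by
    have := habove dg hdgpos hdglt
    rw [← hy] at this
    exact_mod_cast this
  have hn0 : (n : ℝ) ≠ 0 := by positivity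
  have hsum : (df : ℝ) / n + (dg : ℝ) / n = 1 := by
    have hcast : (df : ℝ) + dg = n := by exact_mod_cast hdfdg
    field_simp
    linarith
  have hkey : (df / n : ℝ) * (An - A0) + (dg / n : ℝ) * (An - A0) = An - A0 := by
    rw [← add_mul, hsum, one_mul]
  linarith
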